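/- Let C be a bounded filtered chain complex. Then for each p and q and all sufficiently large r (depending on the filtration bounds), the page E^r_{p,q} is canonically isomorphic to F_p(H_{p+q}(C)) / F_{p-1}(H_{p+q}(C)), where F_p(H(C)) = im(H(F_p C) → H(C)). -/

import Mathlib

/- A filtered chain complex is modelled as an abelian group `C` with a grading
`deg : ℤ → AddSubgroup C` (internal direct sum `C = ⊕ C_k`), a degree `-1` differential `d`
with `d ∘ d = 0`, and a monotone, `d`-invariant filtration `F`. -/

/-- `Z^r_{p,q} = F_p C_{p+q} ∩ ∂⁻¹(F_{p-r} C_{p+q-1})`. -/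
def Zgrp {C : Type*} [AddCommGroup C] (d : C →+ C) (F deg : ℤ → AddSubgroup C)
    (r p q : ℤ) : AddSubgroup C :=
  F p ⊓ deg (p + q) ⊓ (F (p - r)).comap d

/-- `B^r_{p,q} = F_p C_{p+q} ∩ ∂(F_{p+r} C_{p+q+1})`. -/
def Bgrp {C : Type*} [AddCommGroup C] (d : C →+ C) (F deg : ℤ → AddSubgroup C)
    (r p q : ℤ) : AddSubgroup C :=
  F p ⊓ deg (p + q) ⊓ (F (p + r) ⊓ deg (p + q + 1)).map d

/-- `E^r_{p,q} = Z^r_{p,q} / (Z^{r-1}_{p-1,q+1} + B^{r-1}_{p,q})`. -/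
abbrev Epage {C : Type*} [AddCommGroup C] (d : C →+ C) (F deg : ℤ → AddSubgroup C)
    (r p q : ℤ) :=
  Zgrp d F deg r p q ⧸
    ((Zgrp d F deg (r - 1) (p - 1) (q + 1) ⊔ Bgrp d F deg (r - 1) p q).addSubgroupOf
      (Zgrp d F deg r p q))

/-- The cycles in homological degree `k`. -/
def cyc {C : Type*} [AddCommGroup C] (d : C →+ C) (deg : ℤ → AddSubgroup C) (k : ℤ) :
    AddSubgroup C := d.ker ⊓ deg k

/-- The boundaries in degree `k`, viewed inside the degree-`k` cycles. -/
def bdryIn {C : Type*} [AddCommGroup C] (d : C →+ C) (deg : ℤ → AddSubgroup C) (k : ℤ) :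
    AddSubgroup (cyc d deg k) := ((deg (k + 1)).map d).addSubgroupOf (cyc d deg k)

/-- The homology `H_k(C)`. -/
abbrev Hk {C : Type*} [AddCommGroup C] (d : C →+ C) (deg : ℤ → AddSubgroup C) (k : ℤ) :=
  cyc d deg k ⧸ bdryIn d deg k

/-- Projection from degree-`k` cycles to `H_k(C)`. -/
def projHk {C : Type*} [AddCommGroup C] (d : C →+ C) (deg : ℤ → AddSubgroup C) (k : ℤ) :
    cyc d deg k →+ Hk d deg k := QuotientAddGroup.mk' (bdryIn d deg k)

/-- The induced filtration `F_p(H_k(C)) = im(H_k(F_p C) → H_k(C))`. -/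
def FHk {C : Type*} [AddCommGroup C] (d : C →+ C) (F deg : ℤ → AddSubgroup C) (p k : ℤ) :
    AddSubgroup (Hk d deg k) :=
  ((F p).addSubgroupOf (cyc d deg k)).map (projHk d deg k)

/-- If the filtration is bounded, then for each `p`, `q` and all sufficiently large `r`,
the page `E^r_{p,q}` is canonically isomorphic to
`F_p(H_{p+q}(C)) / F_{p-1}(H_{p+q}(C))`, via the map induced by the identity on
representatives. -/
theorem Epage_stabilizes_to_graded_homology
    {C : Type*} [AddCommGroup C] (d : C →+ C) (hd : ∀ x, d (d x) = 0)
    (deg : ℤ → AddSubgroup C) (hinternal : DirectSum.IsInternal deg)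
    (hddeg : ∀ k, (deg k).map d ≤ deg (k - 1))
    (F : ℤ → AddSubgroup C) (hmono : Monotone F) (hdF : ∀ p, (F p).map d ≤ F p)
    (a b : ℤ) (hab : a ≤ b) (ha : F a = ⊥) (hb : F b = ⊤)
    (p q : ℤ) :
    ∃ r0 : ℤ, ∀ r : ℤ, r0 ≤ r →
      ∃ e : Epage d F deg r p q ≃+
          (FHk d F deg p (p + q) ⧸
            (FHk d F deg (p - 1) (p + q)).addSubgroupOf (FHk d F deg p (p + q))),
        ∀ (x : C) (hx : x ∈ Zgrp d F deg r p q) (hc : x ∈ cyc d deg (p + q))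
          (h1 : projHk d deg (p + q) ⟨x, hc⟩ ∈ FHk d F deg p (p + q)),
          e (QuotientAddGroup.mk ⟨x, hx⟩) =
            QuotientAddGroup.mk ⟨projHk d deg (p + q) ⟨x, hc⟩, h1⟩ := by
  refine ⟨max (p - a) (b - p + 1), fun r hr => ?_⟩
  have hbot : F (p - r) = ⊥ :=
    le_bot_iff.mp (ha ▸ hmono (by omega : p - r ≤ a))
  have hbot' : F (p - 1 - (r - 1)) = ⊥ :=
    le_bot_iff.mp (ha ▸ hmono (by omega : p - 1 - (r - 1) ≤ a))
  have htop : F (p + (r - 1)) = ⊤ :=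
    top_le_iff.mp (hb ▸ hmono (by omega : b ≤ p + (r - 1)))
  -- membership characterizations
  have hZmem : ∀ x : C, x ∈ Zgrp d F deg r p q ↔ x ∈ F p ∧ x ∈ deg (p + q) ∧ d x = 0 := by
    intro x
    simp only [Zgrp, AddSubgroup.mem_inf, AddSubgroup.mem_comap, hbot, AddSubgroup.mem_bot]
    tauto
  have hZ'mem : ∀ x : C,
      x ∈ Zgrp d F deg (r - 1) (p - 1) (q + 1) ↔ x ∈ F (p - 1) ∧ x ∈ deg (p + q) ∧ d x = 0 := by
    intro x
    simp only [Zgrp, AddSubgroup.mem_inf, AddSubgroup.mem_comap, hbot', AddSubgroup.mem_bot,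
      show p - 1 + (q + 1) = p + q by omega]
    tauto
  have hBmem : ∀ x : C,
      x ∈ Bgrp d F deg (r - 1) p q ↔
        x ∈ F p ∧ x ∈ deg (p + q) ∧ ∃ u ∈ deg (p + q + 1), d u = x := by
    intro x
    simp only [Bgrp, AddSubgroup.mem_inf, AddSubgroup.mem_map, htop, AddSubgroup.mem_top,
      true_and]
    tauto
  have hcycmem : ∀ x : C, x ∈ cyc d deg (p + q) ↔ d x = 0 ∧ x ∈ deg (p + q) := by
    intro x
    simp only [cyc, AddSubgroup.mem_inf, AddMonoidHom.mem_ker]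
  have hbdrymem : ∀ y : cyc d deg (p + q),
      y ∈ bdryIn d deg (p + q) ↔ ∃ u ∈ deg (p + q + 1), d u = (y : C) := by
    intro y
    simp only [bdryIn, AddSubgroup.mem_addSubgroupOf, AddSubgroup.mem_map]
  have hFHkmem : ∀ (p' : ℤ) (h : Hk d deg (p + q)),
      h ∈ FHk d F deg p' (p + q) ↔
        ∃ y : cyc d deg (p + q), (y : C) ∈ F p' ∧ projHk d deg (p + q) y = h := by
    intro p' h
    simp only [FHk, AddSubgroup.mem_map, AddSubgroup.mem_addSubgroupOf]
  -- Z^r ≤ cyc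
  have hle : Zgrp d F deg r p q ≤ cyc d deg (p + q) := by
    intro x hx
    rw [hZmem] at hx
    exact (hcycmem x).mpr ⟨hx.2.2, hx.2.1⟩
  -- the map to homology classes
  have hmemF : ∀ x : Zgrp d F deg r p q,
      ((projHk d deg (p + q)).comp (AddSubgroup.inclusion hle)) x ∈ FHk d F deg p (p + q) := by
    intro x
    exact (hFHkmem p _).mpr ⟨AddSubgroup.inclusion hle x, ((hZmem x).mp x.2).1, rfl⟩
  set N := ((Zgrp d F deg (r - 1) (p - 1) (q + 1) ⊔ Bgrp d F deg (r - 1) p q).addSubgroupOf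
      (Zgrp d F deg r p q)) with hN
  set φ : Zgrp d F deg r p q →+
      (FHk d F deg p (p + q) ⧸
        (FHk d F deg (p - 1) (p + q)).addSubgroupOf (FHk d F deg p (p + q))) :=
    (QuotientAddGroup.mk' _).comp
      (AddMonoidHom.codRestrict ((projHk d deg (p + q)).comp (AddSubgroup.inclusion hle))
        (FHk d F deg p (p + q)) hmemF) with hφ
  -- φ vanishes iff the class lies in F_{p-1} H
  have hφzero : ∀ x : Zgrp d F deg r p q,
      φ x = 0 ↔ projHk d deg (p + q) (AddSubgroup.inclusion hle x) ∈ FHk d F deg (p - 1) (p + q) := by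
    intro x
    rw [hφ]
    rw [AddMonoidHom.comp_apply, QuotientAddGroup.mk'_apply, QuotientAddGroup.eq_zero_iff,
      AddSubgroup.mem_addSubgroupOf]
    rfl
  have hNzero : ∀ x ∈ N, φ x = 0 := by
    intro x hx
    rw [hN, AddSubgroup.mem_addSubgroupOf, AddSubgroup.mem_sup] at hx
    obtain ⟨y, hy, w, hw, hyw⟩ := hx
    rw [hZ'mem] at hy
    rw [hBmem] at hw
    obtain ⟨u, hu, hdu⟩ := hw.2.2
    have hycyc : y ∈ cyc d deg (p + q) := (hcycmem y).mpr ⟨hy.2.2, hy.2.1⟩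
    have hwcyc : w ∈ cyc d deg (p + q) := (hcycmem w).mpr ⟨by rw [← hdu]; exact hd u, hw.2.1⟩
    rw [hφzero]
    have hsplit : AddSubgroup.inclusion hle x = (⟨y, hycyc⟩ : cyc d deg (p + q)) + ⟨w, hwcyc⟩ := by
      apply Subtype.ext
      exact hyw.symm
    rw [hsplit, map_add]
    have hwzero : projHk d deg (p + q) ⟨w, hwcyc⟩ = 0 := by
      rw [projHk, QuotientAddGroup.mk'_apply, QuotientAddGroup.eq_zero_iff]
      exact (hbdrymem _).mpr ⟨u, hu, hdu⟩
    rw [hwzero, add_zero]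
    exact (hFHkmem (p - 1) _).mpr ⟨⟨y, hycyc⟩, hy.1, rfl⟩
  have hNzero' : N ≤ φ.ker := fun x hx => (AddMonoidHom.mem_ker).mpr (hNzero x hx)
  set ψ := QuotientAddGroup.lift N φ hNzero' with hψ
  have hinj : Function.Injective ψ := by
    rw [injective_iff_map_eq_zero]
    intro t ht
    induction t using QuotientAddGroup.induction_on with
    | H x =>
      rw [hψ, QuotientAddGroup.lift_mk'] at ht
      rw [hφzero] at ht
      obtain ⟨y, hyF, hyproj⟩ := (hFHkmem (p - 1) _).mp ht
      have hsub : AddSubgroup.inclusion hle x - y ∈ bdryIn d deg (p + q) := by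
        rw [← QuotientAddGroup.eq_zero_iff, ← QuotientAddGroup.mk'_apply, ← projHk, map_sub,
          hyproj, sub_self]
      obtain ⟨u, hu, hdu⟩ := (hbdrymem _).mp hsub
      rw [QuotientAddGroup.eq_zero_iff, hN, AddSubgroup.mem_addSubgroupOf, AddSubgroup.mem_sup]
      have hxZ := (hZmem x).mp x.2
      refine ⟨(y : C), ?_, (x : C) - (y : C), ?_, by abel⟩
      · rw [hZ'mem]
        exact ⟨hyF, y.2.2, y.2.1⟩
      · rw [hBmem]
        refine ⟨sub_mem hxZ.1 (hmono (by omega : p - 1 ≤ p) hyF),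
          sub_mem hxZ.2.1 y.2.2, u, hu, ?_⟩
        simpa using hdu
  have hsurj : Function.Surjective ψ := by
    intro t
    induction t using QuotientAddGroup.induction_on with
    | H s =>
      obtain ⟨y, hyF, hyproj⟩ := (hFHkmem p _).mp s.2
      have hycyc := y.2
      rw [hcycmem] at hycyc
      have hxZ : (y : C) ∈ Zgrp d F deg r p q := (hZmem _).mpr ⟨hyF, hycyc.2, hycyc.1⟩
      refine ⟨QuotientAddGroup.mk (⟨(y : C), hxZ⟩ : Zgrp d F deg r p q), ?_⟩
      rw [hψ]
      show QuotientAddGroup.lift N φ hNzero' (QuotientAddGroup.mk _) = _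
      rw [QuotientAddGroup.lift_mk]
      apply congrArg QuotientAddGroup.mk
      apply Subtype.ext
      show projHk d deg (p + q) (AddSubgroup.inclusion hle ⟨(y : C), hxZ⟩) = (s : Hk d deg (p + q))
      rw [← hyproj]
      congr 1
  refine ⟨AddEquiv.ofBijective ψ ⟨hinj, hsurj⟩, ?_⟩
  intro x hx hc h1
  show ψ (QuotientAddGroup.mk _) = _
  rw [hψ, QuotientAddGroup.lift_mk]
  rfl
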